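/- Let H be a Hilbert space, E a projection on H, and Y a partial isometry with Y*Y = E and YY* = 1 − E. Define X_t = cos(πt/2)·1 + sin(πt/2)·(Y − Y*) for t ∈ [0,1]. Then each X_t is a unitary operator, X₀ = 1, X₁ = Y − Y*, and ‖X_{t₁} − X_{t₂}‖ ≤ π·|t₁ − t₂| for all t₁, t₂ ∈ [0,1]. Moreover Ad X₁ exchanges E and 1 − E, i.e., X₁ E X₁* = 1 − E. -/

import Mathlib

set_option synthInstance.maxHeartbeats 1000000
set_option maxHeartbeats 1000000

private lemma rotation_unit_aux {H : Type*} [NormedAddCommGroup H] [InnerProductSpace ℂ H]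
    [CompleteSpace H] (S : H →L[ℂ] H) (hSS : S * S = -1) (c s : ℝ) (hcs : c ^ 2 + s ^ 2 = 1) :
    (c • (1 : H →L[ℂ] H) - s • S) * (c • 1 + s • S) = 1 := by
  have h1 : (c • (1 : H →L[ℂ] H) - s • S) * (c • 1 + s • S)
      = (c * c) • 1 + (c * s - s * c) • S - (s * s) • (S * S) := by
    simp only [sub_mul, mul_add, smul_mul_assoc, mul_smul_comm, one_mul, mul_one, smul_smul]
    module
  rw [h1, hSS, show c * c = 1 - s * s by nlinarith, show c * s - s * c = 0 by ring]
  simp only [zero_smul, add_zero, smul_neg, sub_neg_eq_add, ← add_smul]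
  rw [show 1 - s * s + s * s = 1 by ring, one_smul]

private lemma rotation_unit_aux' {H : Type*} [NormedAddCommGroup H] [InnerProductSpace ℂ H]
    [CompleteSpace H] (S : H →L[ℂ] H) (hSS : S * S = -1) (c s : ℝ) (hcs : c ^ 2 + s ^ 2 = 1) :
    (c • (1 : H →L[ℂ] H) + s • S) * (c • 1 - s • S) = 1 := by
  have := rotation_unit_aux S hSS c (-s) (by nlinarith)
  simpa [neg_smul, sub_neg_eq_add, ← sub_eq_add_neg] using this


private lemma abs_cos_sub_cos_le (a b : ℝ) : |Real.cos a - Real.cos b| ≤ |a - b| := by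
  have := Convex.norm_image_sub_le_of_norm_hasDerivWithin_le (f := Real.cos)
    (f' := fun x => -Real.sin x) (s := Set.univ)
    (fun x _ => (Real.hasDerivAt_cos x).hasDerivWithinAt)
    (fun x _ => by
      rw [Real.norm_eq_abs, abs_neg]
      exact abs_le.2 ⟨Real.neg_one_le_sin x, Real.sin_le_one x⟩)
    convex_univ (Set.mem_univ b) (Set.mem_univ a)
  simpa [Real.norm_eq_abs] using this

private lemma abs_sin_sub_sin_le (a b : ℝ) : |Real.sin a - Real.sin b| ≤ |a - b| := by
  have := Convex.norm_image_sub_le_of_norm_hasDerivWithin_le (f := Real.sin)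
    (f' := fun x => Real.cos x) (s := Set.univ)
    (fun x _ => (Real.hasDerivAt_sin x).hasDerivWithinAt)
    (fun x _ => by
      rw [Real.norm_eq_abs]
      exact abs_le.2 ⟨Real.neg_one_le_cos x, Real.cos_le_one x⟩)
    convex_univ (Set.mem_univ b) (Set.mem_univ a)
  simpa [Real.norm_eq_abs] using this

/-- Let `E` be a projection on a Hilbert space `H` and `Y` a partial isometry
with `Y*Y = E`, `YY* = 1 − E`. With `X_t = cos(πt/2)⬝1 + sin(πt/2)⬝(Y − Y*)`, each `X_t`
is unitary, `X_0 = 1`, `X_1 = Y − Y*`, `‖X_{t₁} − X_{t₂}‖ ≤ π|t₁ − t₂|` on `[0,1]`, and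
`X_1 E X_1* = 1 − E`. -/
theorem rotation_path_exchanging_projections
    {H : Type*} [NormedAddCommGroup H] [InnerProductSpace ℂ H] [CompleteSpace H]
    (E Y : H →L[ℂ] H) (hE1 : IsSelfAdjoint E) (hE2 : IsIdempotentElem E)
    (hY1 : star Y * Y = E) (hY2 : Y * star Y = 1 - E) :
    (∀ t : ℝ,
      Real.cos (Real.pi * t / 2) • (1 : H →L[ℂ] H)
        + Real.sin (Real.pi * t / 2) • (Y - star Y) ∈ unitary (H →L[ℂ] H)) ∧
    (Real.cos (Real.pi * 0 / 2) • (1 : H →L[ℂ] H)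
        + Real.sin (Real.pi * 0 / 2) • (Y - star Y) = 1) ∧
    (Real.cos (Real.pi * 1 / 2) • (1 : H →L[ℂ] H)
        + Real.sin (Real.pi * 1 / 2) • (Y - star Y) = Y - star Y) ∧
    (∀ t₁ ∈ Set.Icc (0:ℝ) 1, ∀ t₂ ∈ Set.Icc (0:ℝ) 1,
      ‖(Real.cos (Real.pi * t₁ / 2) • (1 : H →L[ℂ] H)
          + Real.sin (Real.pi * t₁ / 2) • (Y - star Y))
        - (Real.cos (Real.pi * t₂ / 2) • (1 : H →L[ℂ] H)
          + Real.sin (Real.pi * t₂ / 2) • (Y - star Y))‖ ≤ Real.pi * |t₁ - t₂|) ∧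
    (Y - star Y) * E * star (Y - star Y) = 1 - E := by
  set S : H →L[ℂ] H := Y - star Y with hSdef
  have hSstar : star S = -S := by
    simp [hSdef, star_sub, neg_sub]
  -- Y * E = Y
  have hYE : Y * E = Y := by
    have h0 : star (Y * E - Y) * (Y * E - Y) = 0 := by
      have hEs : star E = E := hE1
      simp only [star_sub, star_mul, hEs, sub_mul, mul_sub]
      rw [show E * star Y * (Y * E) = E * (star Y * Y) * E by noncomm_ring,
        show E * star Y * Y = E * (star Y * Y) by noncomm_ring, hY1,
        show star Y * (Y * E) = star Y * Y * E by noncomm_ring, hY1, hE2]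
      rw [hE2.eq]
      abel
    have hz := CStarRing.star_mul_self_eq_zero_iff (Y * E - Y) |>.mp h0
    have : Y * E - Y = 0 := hz
    linear_combination (norm := noncomm_ring) this
  -- E * Y = 0
  have hEY : E * Y = 0 := by
    have h1 : (1 - E) * Y = Y := by
      rw [← hY2, show Y * star Y * Y = Y * (star Y * Y) by noncomm_ring, hY1, hYE]
    rw [sub_mul, one_mul] at h1
    exact sub_eq_self.mp h1
  have hYY : Y * Y = 0 := by
    calc Y * Y = Y * E * Y := by rw [hYE]
    _ = Y * (E * Y) := by rw [mul_assoc]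
    _ = 0 := by rw [hEY, mul_zero]
  have hYsYs : star Y * star Y = 0 := by
    have := congrArg star hYY
    simpa [star_mul] using this
  have hSS : S * S = -1 := by
    have h : S * S = Y * Y + star Y * star Y - (Y * star Y + star Y * Y) := by
      simp only [hSdef]; noncomm_ring
    rw [h, hYY, hYsYs, hY1, hY2]
    abel
  have hSnorm : ‖S‖ ≤ 1 := by
    have h1 : star S * S = 1 := by
      rw [hSstar, neg_mul, hSS]; simp
    have h2 : ‖S‖ * ‖S‖ ≤ 1 := by
      rw [← CStarRing.norm_star_mul_self, h1]
      exact ContinuousLinearMap.norm_id_le (𝕜 := ℂ) (E := H)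
    nlinarith [norm_nonneg S]
  have key : ∀ c s : ℝ, c ^ 2 + s ^ 2 = 1 →
      (c • (1 : H →L[ℂ] H) + s • S) ∈ unitary (H →L[ℂ] H) := by
    intro c s hcs
    rw [Unitary.mem_iff]
    have hstar : star (c • (1 : H →L[ℂ] H) + s • S) = c • 1 - s • S := by
      simp [star_smul, hSstar, sub_eq_add_neg]
    exact ⟨by rw [hstar]; exact rotation_unit_aux S hSS c s hcs,
      by rw [hstar]; exact rotation_unit_aux' S hSS c s hcs⟩
  refine ⟨fun t => key _ _ (by rw [← Real.cos_sq_add_sin_sq (Real.pi * t / 2)]),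
    by simp, by simp, ?_, ?_⟩
  · intro t₁ _ t₂ _
    have hd : (Real.cos (Real.pi * t₁ / 2) • (1 : H →L[ℂ] H)
          + Real.sin (Real.pi * t₁ / 2) • S)
        - (Real.cos (Real.pi * t₂ / 2) • (1 : H →L[ℂ] H)
          + Real.sin (Real.pi * t₂ / 2) • S)
        = (Real.cos (Real.pi * t₁ / 2) - Real.cos (Real.pi * t₂ / 2)) • 1
          + (Real.sin (Real.pi * t₁ / 2) - Real.sin (Real.pi * t₂ / 2)) • S := by
      module
    rw [hd]
    have hcos : |Real.cos (Real.pi * t₁ / 2) - Real.cos (Real.pi * t₂ / 2)|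
        ≤ |Real.pi * t₁ / 2 - Real.pi * t₂ / 2| := by
      exact abs_cos_sub_cos_le _ _
    have hsin : |Real.sin (Real.pi * t₁ / 2) - Real.sin (Real.pi * t₂ / 2)|
        ≤ |Real.pi * t₁ / 2 - Real.pi * t₂ / 2| := by
      exact abs_sin_sub_sin_le _ _
    have habs : |Real.pi * t₁ / 2 - Real.pi * t₂ / 2| = (Real.pi / 2) * |t₁ - t₂| := by
      rw [show Real.pi * t₁ / 2 - Real.pi * t₂ / 2 = (Real.pi / 2) * (t₁ - t₂) by ring,
        abs_mul, abs_of_nonneg (by positivity : (0:ℝ) ≤ Real.pi / 2)]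
    have hone : ‖(1 : H →L[ℂ] H)‖ ≤ 1 := by
      exact ContinuousLinearMap.norm_id_le (𝕜 := ℂ) (E := H)
    calc ‖(Real.cos (Real.pi * t₁ / 2) - Real.cos (Real.pi * t₂ / 2)) • (1 : H →L[ℂ] H)
          + (Real.sin (Real.pi * t₁ / 2) - Real.sin (Real.pi * t₂ / 2)) • S‖
        ≤ ‖(Real.cos (Real.pi * t₁ / 2) - Real.cos (Real.pi * t₂ / 2)) • (1 : H →L[ℂ] H)‖
          + ‖(Real.sin (Real.pi * t₁ / 2) - Real.sin (Real.pi * t₂ / 2)) • S‖ :=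
          norm_add_le _ _
      _ = |Real.cos (Real.pi * t₁ / 2) - Real.cos (Real.pi * t₂ / 2)| * ‖(1 : H →L[ℂ] H)‖
          + |Real.sin (Real.pi * t₁ / 2) - Real.sin (Real.pi * t₂ / 2)| * ‖S‖ := by
          rw [norm_smul, norm_smul, Real.norm_eq_abs, Real.norm_eq_abs]
      _ ≤ |Real.pi * t₁ / 2 - Real.pi * t₂ / 2| * 1
          + |Real.pi * t₁ / 2 - Real.pi * t₂ / 2| * 1 := by
          gcongr
      _ = Real.pi * |t₁ - t₂| := by rw [habs]; ring
  · have hYsE : star Y * E = 0 := by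
      rw [← hY1, show star Y * (star Y * Y) = star Y * star Y * Y by noncomm_ring, hYsYs,
        zero_mul]
    have hSE : S * E = Y := by
      rw [hSdef, sub_mul, hYE, hYsE, sub_zero]
    rw [show (Y - star Y) * E * star (Y - star Y) = S * E * star S from rfl, hSE, hSstar,
      mul_neg, hSdef, mul_sub, hYY, hY2, zero_sub, neg_neg]
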